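/- Let K = ℚ(θ) be an algebraic number field of degree n, where θ is an algebraic integer with minimal polynomial p(x) = α₀ + α₁x + ··· + α_{n-1}x^{n-1} - x^n with all α_i ∈ ℤ. Let M = ℤ[θ] and define the ℚ-linear map φ : K → ℚ by φ(a₀ + a₁θ + ··· + a_{n-1}θ^{n-1}) = a_{n-1}. Then for x ∈ K: x ∈ M if and only if φ(xy) ∈ ℤ for all y ∈ M. -/

import Mathlib

open Polynomial in
/-- Every element of `ℤ[θ]` has integer coordinates in the power basis. -/
theorem aux_int_coords {K : Type*} [Field K] [Algebra ℚ K] {n : ℕ} (hn : 0 < n)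
    (θ : K) (hint : IsIntegral ℤ θ)
    (b : Module.Basis (Fin n) ℚ K) (hb : ∀ i : Fin n, b i = θ ^ (i : ℕ))
    (hdeg : (minpoly ℤ θ).natDegree ≤ n) :
    ∀ z ∈ Algebra.adjoin ℤ ({θ} : Set K), ∀ j : Fin n,
      b.repr z j ∈ (Int.castRingHom ℚ).range := by
  intro z hz j
  rw [Algebra.adjoin_singleton_eq_range_aeval, AlgHom.mem_range] at hz
  obtain ⟨f, hf⟩ := hz
  set m := minpoly ℤ θ with hmdef
  have hm : m.Monic := minpoly.monic hint
  set r := f %ₘ m with hrdef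
  have hzr : z = Polynomial.aeval θ r := by
    have h0 : Polynomial.aeval θ m = 0 := minpoly.aeval ℤ θ
    rw [← hf, hrdef, Polynomial.modByMonic_eq_sub_mul_div f m, map_sub, map_mul, h0]
    ring
  have hrd : r.natDegree < n := by
    rcases eq_or_ne r 0 with h0 | h0
    · simpa [h0] using hn
    · have h1 : r.degree < m.degree := Polynomial.degree_modByMonic_lt f hm
      have := Polynomial.natDegree_lt_natDegree h0 h1
      omega
  have hz2 : z = ∑ i : Fin n, ((r.coeff (i : ℕ) : ℚ)) • b i := by
    rw [hzr, Polynomial.aeval_eq_sum_range' hrd, ← Fin.sum_univ_eq_sum_range]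
    refine Finset.sum_congr rfl fun i _ => ?_
    rw [hb i, Int.cast_smul_eq_zsmul]
  rw [hz2, b.repr_sum_self]
  exact ⟨r.coeff (j : ℕ), rfl⟩

/-- For a number field `K = ℚ(θ)` of degree `n` with `θ` an algebraic integer,
with `M = ℤ[θ]` and `φ : K → ℚ` the coefficient of `θ^{n-1}`, one has
`x ∈ M ⟺ φ(xy) ∈ ℤ` for all `y ∈ M`. -/
theorem stmt_14 {K : Type*} [Field K] [Algebra ℚ K] {n : ℕ} (hn : 0 < n)
    (θ : K) (hint : IsIntegral ℤ θ)
    (b : Module.Basis (Fin n) ℚ K) (hb : ∀ i : Fin n, b i = θ ^ (i : ℕ)) :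
    ∀ x : K, x ∈ Algebra.adjoin ℤ ({θ} : Set K) ↔
      ∀ y ∈ Algebra.adjoin ℤ ({θ} : Set K),
        ∃ k : ℤ, b.repr (x * y) ⟨n - 1, by omega⟩ = (k : ℚ) := by
  have hfin : FiniteDimensional ℚ K := Module.Basis.finiteDimensional_of_finite b
  have hrank : Module.finrank ℚ K = n := by
    rw [Module.finrank_eq_card_basis b, Fintype.card_fin]
  have hdeg : (minpoly ℤ θ).natDegree ≤ n := by
    have h1 : minpoly ℚ θ = (minpoly ℤ θ).map (algebraMap ℤ ℚ) :=
      minpoly.isIntegrallyClosed_eq_field_fractions ℚ K hint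
    have h2 := minpoly.natDegree_le θ (A := ℚ)
    rwa [h1, (minpoly.monic hint).natDegree_map, hrank] at h2
  have key := aux_int_coords hn θ hint b hb hdeg
  have hpow : ∀ k : ℕ, θ ^ k ∈ Algebra.adjoin ℤ ({θ} : Set K) :=
    fun k => pow_mem (Algebra.self_mem_adjoin_singleton ℤ θ) k
  intro x
  constructor
  · intro hx y hy
    obtain ⟨k, hk⟩ := key _ (mul_mem hx hy) ⟨n - 1, by omega⟩
    exact ⟨k, hk.symm⟩
  · intro H
    -- coordinate expansion of x * θ^k
    have hcoord : ∀ (k : ℕ) (j : Fin n), b.repr (x * θ ^ k) j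
        = ∑ i : Fin n, b.repr x i * b.repr (θ ^ ((i : ℕ) + k)) j := by
      intro k j
      have hx : x * θ ^ k = ∑ i : Fin n, b.repr x i • θ ^ ((i : ℕ) + k) := by
        conv_lhs => rw [← b.sum_repr x]
        rw [Finset.sum_mul]
        refine Finset.sum_congr rfl fun i _ => ?_
        rw [hb i, smul_mul_assoc, pow_add]
      rw [hx, map_sum, Finsupp.finset_sum_apply]
      refine Finset.sum_congr rfl fun i _ => ?_
      rw [map_smul, Finsupp.smul_apply, smul_eq_mul]
    set j₀ : Fin n := ⟨n - 1, by omega⟩ with hj₀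
    have claim : ∀ k, k < n → b.repr x ⟨n - 1 - k, by omega⟩ ∈ (Int.castRingHom ℚ).range := by
      intro k
      induction k using Nat.strong_induction_on with
      | _ k IH =>
        intro hk
        obtain ⟨t, ht⟩ := H (θ ^ k) (hpow k)
        have hL : b.repr (x * θ ^ k) j₀ ∈ (Int.castRingHom ℚ).range := ⟨t, ht.symm⟩
        set i₀ : Fin n := ⟨n - 1 - k, by omega⟩ with hi₀
        have hsum := hcoord k j₀
        have h1 : b.repr (θ ^ ((i₀ : ℕ) + k)) j₀ = 1 := by
          have hii : (i₀ : ℕ) + k = (j₀ : ℕ) := by simp [hi₀, hj₀]; omega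
          rw [hii, ← hb j₀, b.repr_self_apply, if_pos rfl]
        rw [← Finset.add_sum_erase _ _ (Finset.mem_univ i₀), h1, mul_one] at hsum
        have hxi : b.repr x i₀ = b.repr (x * θ ^ k) j₀
            - ∑ i ∈ Finset.univ.erase i₀, b.repr x i * b.repr (θ ^ ((i : ℕ) + k)) j₀ := by
          rw [hsum]; ring
        rw [hxi]
        refine Subring.sub_mem _ hL (Subring.sum_mem _ fun i hi => ?_)
        have hne : i ≠ i₀ := (Finset.mem_erase.mp hi).1
        by_cases hcase : (i : ℕ) + k < n
        · have hzero : b.repr (θ ^ ((i : ℕ) + k)) j₀ = 0 := by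
            rw [show θ ^ ((i : ℕ) + k) = b ⟨(i : ℕ) + k, hcase⟩ by rw [hb],
              b.repr_self_apply, if_neg]
            intro hcontra
            apply hne
            have : (i : ℕ) + k = n - 1 := congrArg Fin.val hcontra
            exact Fin.ext (show (i : ℕ) = n - 1 - k by omega)
          rw [hzero, mul_zero]
          exact Subring.zero_mem _
        · have hik : (i : ℕ) ≤ n - 1 := by omega
          have h1 := IH (n - 1 - (i : ℕ)) (by omega) (by omega)
          have hieq : (⟨n - 1 - (n - 1 - (i : ℕ)), by omega⟩ : Fin n) = i :=
            Fin.ext (by simp; omega)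
          rw [hieq] at h1
          exact Subring.mul_mem _ h1 (key _ (hpow _) j₀)
    have hall : ∀ i : Fin n, b.repr x i ∈ (Int.castRingHom ℚ).range := by
      intro i
      have h1 := claim (n - 1 - (i : ℕ)) (by omega)
      have hieq : (⟨n - 1 - (n - 1 - (i : ℕ)), by omega⟩ : Fin n) = i :=
        Fin.ext (by simp; omega)
      rwa [hieq] at h1
    choose c hc using hall
    have hx : x = ∑ i : Fin n, (c i) • θ ^ (i : ℕ) := by
      rw [← b.sum_repr x]
      refine Finset.sum_congr rfl fun i _ => ?_
      rw [hb i, ← hc i, eq_intCast, Int.cast_smul_eq_zsmul]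
    rw [hx]
    exact Subalgebra.sum_mem _ fun i _ => zsmul_mem (hpow (i : ℕ)) (c i)
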